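/- Fix an integer N ≥ 1 and real numbers μ_i[0] > 0 for 0 ≤ i ≤ N−1, and let the sequences μ_i : ℕ → (0,∞) be determined by the recursion μ_i[n+1] = μ_i[n]·exp( 2·Σ_{j=0}^{i−1} μ_j[n+1] ). Let a > 0 and n₀ ∈ ℕ, and suppose μ_j[n₀] = (a/N)·e^{−2ja/N} for every 0 ≤ j ≤ N−1. Then μ_j[n₀+1] = a/N for every 0 ≤ j ≤ N−1; consequently Σ_{j=0}^{N−1} μ_j[n₀+1] = a, and any sequence E : ℕ → (0,∞) satisfying E[n+1] = E[n]·exp( Σ_{j=0}^{N−1} μ_j[n+1] ) satisfies E[n₀+1] = e^{a}·E[n₀]. -/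

import Mathlib

/-- The recursive system modelling the energy exchange between `N` spherically symmetric
Vlasov beams: `μ_i[n+1] = μ_i[n]·exp(2·Σ_{j=0}^{i−1} μ_j[n+1])` for `0 ≤ i ≤ N−1`
(the empty sum being `0` for `i = 0`). -/
def MuRec (N : ℕ) (μ : ℕ → ℕ → ℝ) : Prop :=
  ∀ i < N, ∀ n : ℕ,
    μ i (n + 1) = μ i n * Real.exp (2 * ∑ j ∈ Finset.range i, μ j (n + 1))

/-- **One step of the recursion starting from the intermediate profile.** If
`μ_j[n₀] = (a/N)·e^{−2ja/N}` for all `j < N`, then `μ_j[n₀+1] = a/N`, so the profile sums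
to `a` and any energy sequence `E[n+1] = E[n]·exp(Σ_j μ_j[n+1])` is amplified by `e^a`. -/
theorem mu_system_profile_step (N : ℕ) (hN : 1 ≤ N) (μ : ℕ → ℕ → ℝ)
    (hpos : ∀ i < N, ∀ n : ℕ, 0 < μ i n) (hrec : MuRec N μ)
    (a : ℝ) (ha : 0 < a) (n₀ : ℕ)
    (hprof : ∀ j < N, μ j n₀ = a / N * Real.exp (-(2 * (j : ℝ) * a / N))) :
    (∀ j < N, μ j (n₀ + 1) = a / N) ∧
      (∑ j ∈ Finset.range N, μ j (n₀ + 1) = a) ∧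
      ∀ E : ℕ → ℝ, (∀ n : ℕ, 0 < E n) →
        (∀ n : ℕ, E (n + 1) = E n * Real.exp (∑ j ∈ Finset.range N, μ j (n + 1))) →
        E (n₀ + 1) = Real.exp a * E n₀ := by
  have key : ∀ j < N, μ j (n₀ + 1) = a / N := by
    intro j
    induction j using Nat.strong_induction_on with
    | _ j ih =>
      intro hj
      have hsum : ∑ k ∈ Finset.range j, μ k (n₀ + 1) = (j : ℝ) * (a / N) := by
        rw [Finset.sum_congr rfl fun k hk =>
          ih k (Finset.mem_range.mp hk) ((Finset.mem_range.mp hk).trans hj)]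
        simp
      rw [hrec j hj n₀, hsum, hprof j hj, mul_assoc, ← Real.exp_add]
      have : -(2 * (j : ℝ) * a / N) + 2 * ((j : ℝ) * (a / N)) = 0 := by ring
      rw [this, Real.exp_zero, mul_one]
  have hsumN : ∑ j ∈ Finset.range N, μ j (n₀ + 1) = a := by
    rw [Finset.sum_congr rfl fun k hk => key k (Finset.mem_range.mp hk)]
    have hN0 : (N : ℝ) ≠ 0 := by positivity
    simp only [Finset.sum_const, Finset.card_range, nsmul_eq_mul]
    field_simp
  exact ⟨key, hsumN, fun E _ hE => by rw [hE n₀, hsumN, mul_comm]⟩
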